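/- Let f = Σ_{ψ∈G*} a_ψ ψ and g = Σ_{ψ∈G*} b_ψ ψ be elements of the group algebra F[G*]. Then the Hermitian inner product of f and g satisfies ⟨f, g⟩_H = (1/n) Σ_{x∈G} f(x) · g(−q^{−1}x)^q, where −q^{−1} denotes the inverse of −q modulo the exponent m of G. -/
import Mathlib


open scoped BigOperators

/-- Let `F = F_{q²}` and let `G` be a finite abelian group of order `n`
coprime to the prime power `q`.  Let `K` be an extension of `F` containing all `m`-th roots
of unity (`m` the exponent of `G`), and identify elements of the group algebra `F[G*]` with
their coefficient functions `a : G* → F`, where `G*` is the group of additive characters of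
`G` with values in `K`; such an element is viewed as the function
`x ↦ ∑ ψ, a ψ * ψ x` on `G`.  If `u` is the inverse of `-q` modulo `m`, then the Hermitian
inner product `⟨f,g⟩_H = ∑ ψ, a ψ * (b ψ)^q` satisfies
`⟨f,g⟩_H = (1/n) ∑_{x ∈ G} f(x) * g(u • x)^q`. -/
theorem stmt0
    {G : Type} [AddCommGroup G] [Fintype G]
    {F K : Type} [Field F] [Fintype F] [Field K] [Algebra F K]
    [Fintype (AddChar G K)]
    (q : ℕ) (hq : IsPrimePow q)
    (hF : Fintype.card F = q ^ 2)
    (hn : Nat.Coprime (Fintype.card G) q)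
    (hK : ∃ ζ : K, IsPrimitiveRoot ζ (AddMonoid.exponent G))
    (u : ℤ)
    (hu : (u : ZMod (AddMonoid.exponent G)) * (-(q : ZMod (AddMonoid.exponent G))) = 1)
    (a b : AddChar G K → F) :
    algebraMap F K (∑ ψ : AddChar G K, a ψ * (b ψ) ^ q)
      = (Fintype.card G : K)⁻¹ *
          ∑ x : G,
            (∑ ψ : AddChar G K, algebraMap F K (a ψ) * ψ x) *
              (∑ ψ : AddChar G K, algebraMap F K (b ψ) * ψ (u • x)) ^ q := by
  classical
  obtain ⟨p, k, hp, hk, rfl⟩ := hq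
  have hp' : p.Prime := hp.nat_prime
  haveI : Fact p.Prime := ⟨hp'⟩
  -- characteristic of F is p
  have hrF : CharP F (ringChar F) := ringChar.charP F
  have hdvd : ringChar F ∣ p ^ (2 * k) := by
    have h0 : ((Fintype.card F : ℕ) : F) = 0 := FiniteField.cast_card_eq_zero F
    have := (CharP.cast_eq_zero_iff F (ringChar F) (Fintype.card F)).mp h0
    rwa [hF, ← pow_mul, mul_comm] at this
  have hrprime : (ringChar F).Prime := CharP.char_is_prime F (ringChar F)
  have hrp : ringChar F = p :=
    (Nat.prime_dvd_prime_iff_eq hrprime hp').mp (hrprime.dvd_of_dvd_pow hdvd)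
  haveI hFp : CharP F p := hrp ▸ hrF
  haveI hKp : CharP K p := charP_of_injective_algebraMap (algebraMap F K).injective p
  haveI : ExpChar K p := ExpChar.prime hp'
  set m := AddMonoid.exponent G with hm
  -- key divisibility
  have hdm : (m : ℤ) ∣ u * (p ^ k : ℕ) + 1 := by
    have h0 : ((u * (p ^ k : ℕ) + 1 : ℤ) : ZMod m) = 0 := by
      have hu' := hu
      push_cast at hu' ⊢
      linear_combination -hu'
    exact (ZMod.intCast_zmod_eq_zero_iff_dvd _ m).mp h0
  have hzero : ∀ x : G, (u * (p ^ k : ℕ) + 1) • x = 0 := by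
    intro x
    obtain ⟨t, ht⟩ := hdm
    rw [ht, mul_comm, mul_smul]
    have hx : (m : ℤ) • x = 0 := by
      rw [natCast_zsmul]
      exact AddMonoid.exponent_nsmul_eq_zero x
    rw [hx, smul_zero]
  have hneg : ∀ x : G, ((p ^ k : ℕ) : ℤ) • (u • x) = -x := by
    intro x
    rw [smul_smul, mul_comm]
    have := hzero x
    rw [add_smul, one_smul] at this

    exact eq_neg_of_add_eq_zero_left this
  have hchar : ∀ (x : G) (φ : AddChar G K), (φ (u • x)) ^ (p ^ k) = φ (-x) := by
    intro x φ
    rw [← AddChar.map_nsmul_eq_pow, ← natCast_zsmul, hneg]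
  have hn0 : (Fintype.card G : K) ≠ 0 := by
    have hpn : ¬ p ∣ Fintype.card G := by
      intro hdv
      have h1 : p ∣ Nat.gcd (Fintype.card G) (p ^ k) :=
        Nat.dvd_gcd hdv (dvd_pow_self p hk.ne')
      rw [hn] at h1
      exact hp'.one_lt.ne' (Nat.dvd_one.mp h1)
    simpa [CharP.cast_eq_zero_iff K p] using hpn
  have hfr : ∀ y : K, y ^ (p ^ k) = iterateFrobenius K p k y := by
    intro y; rw [iterateFrobenius_def]
  have step1 : ∀ x : G, (∑ φ : AddChar G K, algebraMap F K (b φ) * φ (u • x)) ^ (p ^ k)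
      = ∑ φ : AddChar G K, (algebraMap F K (b φ)) ^ (p ^ k) * φ (-x) := by
    intro x
    rw [hfr, map_sum]
    refine Finset.sum_congr rfl fun φ _ => ?_
    rw [map_mul, ← hfr, ← hfr, hchar]
  have orth : ∀ ψ φ : AddChar G K, ∑ x : G, ψ x * φ (-x)
      = if φ = ψ then (Fintype.card G : K) else 0 := by
    intro ψ φ
    have h1 : ∀ x : G, ψ x * φ (-x) = (ψ - φ) x := fun x => (AddChar.sub_apply ψ φ x).symm
    simp_rw [h1]
    rw [AddChar.sum_eq_ite]
    simp only [sub_eq_zero]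
    rcases eq_or_ne ψ φ with h | h
    · simp [h]
    · simp [h, h.symm]
  rw [eq_inv_mul_iff_mul_eq₀ hn0]
  simp only [step1]
  calc (Fintype.card G : K) * algebraMap F K (∑ ψ : AddChar G K, a ψ * b ψ ^ p ^ k)
      = ∑ ψ : AddChar G K, algebraMap F K (a ψ) *
          ((algebraMap F K (b ψ)) ^ (p ^ k) * (Fintype.card G : K)) := by
        rw [map_sum, Finset.mul_sum]
        refine Finset.sum_congr rfl fun ψ _ => ?_
        rw [map_mul, map_pow]; ring
    _ = ∑ ψ : AddChar G K, ∑ φ : AddChar G K, algebraMap F K (a ψ) *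
          ((algebraMap F K (b φ)) ^ (p ^ k) *
            (if φ = ψ then (Fintype.card G : K) else 0)) := by
        refine Finset.sum_congr rfl fun ψ _ => ?_
        simp [mul_ite, mul_zero, Finset.sum_ite_eq']
    _ = ∑ ψ : AddChar G K, ∑ φ : AddChar G K, ∑ x : G,
          (algebraMap F K (a ψ) * ψ x) * ((algebraMap F K (b φ)) ^ (p ^ k) * φ (-x)) := by
        refine Finset.sum_congr rfl fun ψ _ => Finset.sum_congr rfl fun φ _ => ?_
        rw [← orth ψ φ]
        simp only [Finset.mul_sum]
        exact Finset.sum_congr rfl fun x _ => by ring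
    _ = ∑ x : G, (∑ ψ : AddChar G K, algebraMap F K (a ψ) * ψ x) *
          (∑ φ : AddChar G K, (algebraMap F K (b φ)) ^ (p ^ k) * φ (-x)) := by
        symm
        simp only [Finset.sum_mul_sum]
        rw [Finset.sum_comm]
        exact Finset.sum_congr rfl fun ψ _ => Finset.sum_comm
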